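/- Let S ≥ 2 and C ≥ 1. Suppose for each stage j ∈ {1,...,S}: ∑_{i=1}^C x_i^j = 1, n^j ≠ 0, V^j ≠ 0, ε ≠ 0, and the unperturbed auxiliary equations hold: ∑_i (L^1(x_i^2 − x_i^1) − V^1(y_i^1 − x_i^1))/n^1 = 0; ∑_i (L^j(x_i^{j+1} − x_i^j) − V^j(y_i^j − x_i^j) + V^{j-1}(y_i^{j-1} − x_i^j))/n^j = 0 for 2 ≤ j ≤ S−1; and ∑_i (ε V^S(x_i^S − y_i^S) + V^{S-1}(y_i^{S-1} − x_i^S))/n^S = 0. Then ∑_{i=1}^C y_i^j = 1 for every j ∈ {1,...,S}. -/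
import Mathlib

theorem stmt_16 (S C : ℕ) (hS : 2 ≤ S) (hC : 1 ≤ C)
    (x y : ℕ → Fin C → ℝ) (L V n : ℕ → ℝ) (ε : ℝ)
    (hxsum : ∀ j, 1 ≤ j → j ≤ S → ∑ i, x j i = 1)
    (hn : ∀ j, 1 ≤ j → j ≤ S → n j ≠ 0)
    (hV : ∀ j, 1 ≤ j → j ≤ S → V j ≠ 0)
    (hε : ε ≠ 0)
    (haux1 : ∑ i, (L 1 * (x 2 i - x 1 i) - V 1 * (y 1 i - x 1 i)) / n 1 = 0)
    (hauxmid : ∀ j, 2 ≤ j → j ≤ S - 1 →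
      ∑ i, (L j * (x (j + 1) i - x j i) - V j * (y j i - x j i)
        + V (j - 1) * (y (j - 1) i - x j i)) / n j = 0)
    (hauxS : ∑ i, (ε * V S * (x S i - y S i) + V (S - 1) * (y (S - 1) i - x S i)) / n S = 0) :
    ∀ j, 1 ≤ j → j ≤ S → ∑ i, y j i = 1 := by
  -- stage 1
  have h1 : ∑ i, y 1 i = 1 := by
    rw [← Finset.sum_div, div_eq_zero_iff] at haux1
    have h0 := haux1.resolve_right (hn 1 le_rfl (by omega))
    have hexp : ∑ i, (L 1 * (x 2 i - x 1 i) - V 1 * (y 1 i - x 1 i))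
        = L 1 * ((∑ i, x 2 i) - (∑ i, x 1 i)) - V 1 * ((∑ i, y 1 i) - (∑ i, x 1 i)) := by
      simp [mul_sub, Finset.sum_sub_distrib, Finset.mul_sum]
    rw [hexp, hxsum 1 le_rfl (by omega), hxsum 2 (by omega) hS] at h0
    have hv := hV 1 le_rfl (by omega)
    have : V 1 * ((∑ i, y 1 i) - 1) = 0 := by linarith
    rcases mul_eq_zero.mp this with h | h
    · exact absurd h hv
    · linarith
  -- stages up to S-1 by induction
  have key : ∀ j, 1 ≤ j → j ≤ S - 1 → ∑ i, y j i = 1 := by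
    intro j
    induction j with
    | zero => omega
    | succ k ih =>
      intro hk1 hk2
      rcases Nat.eq_or_lt_of_le hk1 with h | h
      · rw [← h]; simpa using h1
      · have hk : 1 ≤ k := by omega
        have hkS : k ≤ S - 1 := by omega
        have ihk := ih hk hkS
        have haux := hauxmid (k+1) (by omega) hk2
        rw [← Finset.sum_div, div_eq_zero_iff] at haux
        have h0 := haux.resolve_right (hn (k+1) (by omega) (by omega))
        have hexp : ∑ i, (L (k+1) * (x (k+1+1) i - x (k+1) i) - V (k+1) * (y (k+1) i - x (k+1) i)
              + V (k+1-1) * (y (k+1-1) i - x (k+1) i))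
            = L (k+1) * ((∑ i, x (k+2) i) - (∑ i, x (k+1) i))
              - V (k+1) * ((∑ i, y (k+1) i) - (∑ i, x (k+1) i))
              + V k * ((∑ i, y k i) - (∑ i, x (k+1) i)) := by
          simp [mul_sub, Finset.sum_sub_distrib, Finset.sum_add_distrib, Finset.mul_sum]
        rw [hexp, hxsum (k+1) (by omega) (by omega), hxsum (k+2) (by omega) (by omega), ihk] at h0
        have hv := hV (k+1) (by omega) (by omega)
        have : V (k+1) * ((∑ i, y (k+1) i) - 1) = 0 := by linarith
        rcases mul_eq_zero.mp this with h' | h'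
        · exact absurd h' hv
        · linarith
  -- stage S
  have hSm1 : ∑ i, y (S-1) i = 1 := key (S-1) (by omega) le_rfl
  have hSfin : ∑ i, y S i = 1 := by
    rw [← Finset.sum_div, div_eq_zero_iff] at hauxS
    have h0 := hauxS.resolve_right (hn S (by omega) le_rfl)
    have hexp : ∑ i, (ε * V S * (x S i - y S i) + V (S - 1) * (y (S - 1) i - x S i))
        = ε * V S * ((∑ i, x S i) - (∑ i, y S i)) + V (S-1) * ((∑ i, y (S-1) i) - (∑ i, x S i)) := by
      simp [mul_sub, Finset.sum_sub_distrib, Finset.sum_add_distrib, Finset.mul_sum]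
    rw [hexp, hxsum S (by omega) le_rfl, hSm1] at h0
    have hv := hV S (by omega) le_rfl
    have : ε * V S * (1 - (∑ i, y S i)) = 0 := by linarith
    rcases mul_eq_zero.mp this with h' | h'
    · exact absurd h' (mul_ne_zero hε hv)
    · linarith
  intro j hj1 hjS
  rcases Nat.lt_or_ge j S with h | h
  · exact key j hj1 (by omega)
  · have : j = S := by omega
    rw [this]; exact hSfin
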